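/- arXiv:1003.2179 — 3 statements merged into one kernel-verified Lean document; each statement's English description precedes it below -/
import Mathlib

section
/- Let γ(u) ∈ 1 + u⁻²ℂ[[u⁻²]], and let μ(u) = γ(u)⁻¹(1+½u⁻¹)⁻¹(1−a₁u⁻¹)⋯(1−a_{2k+1}u⁻¹), where a_{2k+1} is the ♯′-special element of (a₁,…,a_{2k+1}) and a_{2i−1}+a_{2i} ∈ ℤ_{≥0} for i = 1,…,k. Then ((2u−1)/(2u+1))·μ(−u) ⇒ μ(u) if and only if a_{2k+1} ∈ ℤ_{≥0}. -/
open PowerSeries Polynomial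

noncomputable section

abbrev PS := PowerSeries ℂ

/-- `f ∈ 1 + u⁻¹ℂ[[u⁻¹]]`, with `X` playing the role of `u⁻¹`. -/
def One1 (f : PS) : Prop := PowerSeries.constantCoeff f = 1

/-- `f ∈ 1 + u⁻²ℂ[[u⁻²]]`: an even power series with constant term 1. -/
def EvenOne (f : PS) : Prop := One1 f ∧ ∀ n, Odd n → PowerSeries.coeff n f = 0

/-- `u^{-deg P}·P(u)` viewed as a power series in `X = u⁻¹`. -/
def lowerP (P : Polynomial ℂ) : PS := (P.reverse : PowerSeries ℂ)

/-- `f → g`: there is a monic `P` with `f/g = P(u+1)/P(u)`. -/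
def Arrow (f g : PS) : Prop :=
  ∃ P : Polynomial ℂ, P.Monic ∧ f * lowerP P = g * lowerP (P.comp (Polynomial.X + 1))

/-- `f ⇒ g`: there is a monic `P` of even degree with `P(u) = P(1−u)` and
`f/g = P(u+1)/P(u)`. -/
def DArrow (f g : PS) : Prop :=
  ∃ P : Polynomial ℂ, P.Monic ∧ Even P.natDegree ∧ P.comp (1 - Polynomial.X) = P ∧
    f * lowerP P = g * lowerP (P.comp (Polynomial.X + 1))

/-- `f(−u)`, i.e. `u⁻¹ ↦ −u⁻¹`. -/
def negU (f : PS) : PS := PowerSeries.rescale (-1) f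

/-- the factor `1 + a·u⁻¹`. -/
def linF (a : ℂ) : PS := 1 + PowerSeries.C a * PowerSeries.X

/-- `f` is a polynomial in `u⁻¹`. -/
def IsPolyPS (f : PS) : Prop := ∃ Q : Polynomial ℂ, (Q : PS) = f

/-- `z ∈ ℤ_{≥0}` (so `a ≥ b` iff `IsNonnegInt (a - b)`). -/
def IsNonnegInt (z : ℂ) : Prop := ∃ n : ℕ, z = n
/-- The ♯′-condition on the list `a 0, …, a (2k)` (0-indexed): for each `i < k`,
whenever `{a p + a q : 2i ≤ p < q ≤ 2k} ∩ ℤ_{≥0}` is non-empty, `a (2i) + a (2i+1)`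
is its minimal element for the order `x ≥ y ↔ x - y ∈ ℤ_{≥0}`. -/
def SharpCond (k : ℕ) (a : ℕ → ℂ) : Prop :=
  ∀ i < k,
    (∃ p q, 2*i ≤ p ∧ p < q ∧ q ≤ 2*k ∧ IsNonnegInt (a p + a q)) →
      IsNonnegInt (a (2*i) + a (2*i+1)) ∧
      ∀ p q, 2*i ≤ p → p < q → q ≤ 2*k → IsNonnegInt (a p + a q) →
        IsNonnegInt (a p + a q - (a (2*i) + a (2*i+1)))

/-- `b` is a re-indexing (permutation) of the first `m` entries of `a`. -/
def PermOf (m : ℕ) (b a : ℕ → ℂ) : Prop :=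
  ∃ σ : Equiv.Perm (Fin m), ∀ i : Fin m, b i = a (σ i)

/-- `x` is a ♯′-special element of the list `a 0, …, a (2k)`. -/
def IsSharpSpecial' (k : ℕ) (a : ℕ → ℂ) (x : ℂ) : Prop :=
  ∃ b : ℕ → ℂ, PermOf (2*k+1) b a ∧ SharpCond k b ∧ b (2*k) = x
section Aux
lemma rev_one : (1 : Polynomial ℂ).reverse = 1 := by
  simpa using Polynomial.reverse_C (1:ℂ)

lemma rev_X : (Polynomial.X : Polynomial ℂ).reverse = 1 := by
  have := Polynomial.reverse_X_mul (1 : Polynomial ℂ)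
  rw [mul_one, rev_one] at this
  exact this

lemma reverse_linear (c : ℂ) : (Polynomial.X + Polynomial.C c).reverse
    = Polynomial.C c * Polynomial.X + 1 := by
  rw [Polynomial.reverse_add_C, rev_X]
  simp [add_comm]

lemma lowerP_mul (p q : ℂ[X]) : lowerP (p * q) = lowerP p * lowerP q := by
  simp [lowerP, Polynomial.reverse_mul_of_domain, Polynomial.coe_mul]

lemma lowerP_prod {ι : Type*} (s : Finset ι) (f : ι → ℂ[X]) :
    lowerP (∏ i ∈ s, f i) = ∏ i ∈ s, lowerP (f i) := by
  classical
  induction s using Finset.induction_on with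
  | empty => simp [lowerP, rev_one]
  | insert _ _ h ih => rw [Finset.prod_insert h, Finset.prod_insert h, lowerP_mul, ih]

lemma lowerP_linear (c : ℂ) : lowerP (Polynomial.X + Polynomial.C c) = linF c := by
  rw [lowerP, reverse_linear, linF]
  push_cast
  ring

lemma lowerP_inj {p q : ℂ[X]} (hd : p.natDegree = q.natDegree)
    (h : lowerP p = lowerP q) : p = q := by
  have h2 : p.reverse = q.reverse := by
    have := Polynomial.coe_injective ℂ h
    exact this
  ext n
  have h3 := congrArg (fun r => Polynomial.coeff r (Polynomial.revAt p.natDegree n)) h2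
  simp only [Polynomial.reverse, Polynomial.coeff_reflect, Polynomial.revAt_invol, hd] at h3
  exact h3

lemma constantCoeff_linF (c : ℂ) : PowerSeries.constantCoeff (linF c) = 1 := by
  simp [linF]

lemma linF_ne_zero (c : ℂ) : linF c ≠ 0 := fun h => by
  have := constantCoeff_linF c
  rw [h] at this
  simp at this

lemma negU_linF (c : ℂ) : negU (linF c) = linF (-c) := by
  unfold negU linF
  ext n
  rw [PowerSeries.coeff_rescale]
  match n with
  | 0 => simp
  | 1 => simp [PowerSeries.coeff_one]
  | (n+2) =>
    simp [PowerSeries.coeff_one, PowerSeries.coeff_C_mul, PowerSeries.coeff_X]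

lemma negU_even {γ : PS} (hγ : EvenOne γ) : negU γ = γ := by
  ext n
  rw [negU, PowerSeries.coeff_rescale]
  rcases Nat.even_or_odd n with he | ho
  · rw [he.neg_one_pow, one_mul]
  · rw [hγ.2 n ho, mul_zero]

lemma key_equiv (k : ℕ) (a : ℕ → ℂ) (γ μ : PS) (hγ : EvenOne γ)
    (hdef : γ * linF (1/2) * μ = ∏ i ∈ Finset.range (2*k+1), linF (-(a i)))
    (A B : PS) :
    (linF (-(1/2)) * (linF (1/2))⁻¹ * negU μ) * A = μ * B ↔
      (∏ i ∈ Finset.range (2*k+1), linF (a i)) * A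
        = (∏ i ∈ Finset.range (2*k+1), linF (-(a i))) * B := by
  have hγ0 : γ ≠ 0 := fun h => by simp [One1, h] at hγ; exact one_ne_zero hγ.1.symm
  have hdef2 : γ * linF (-(1/2)) * negU μ = ∏ i ∈ Finset.range (2*k+1), linF (a i) := by
    have := congrArg (PowerSeries.rescale (-1)) hdef
    rw [map_mul, map_mul, map_prod] at this
    rw [show (PowerSeries.rescale (-1) γ) = negU γ from rfl, negU_even hγ,
      show (PowerSeries.rescale (-1) (linF (1/2))) = negU (linF (1/2)) from rfl,
      negU_linF] at this
    rw [show negU μ = PowerSeries.rescale (-1) μ from rfl, this]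
    refine Finset.prod_congr rfl fun i _ => ?_
    rw [show (PowerSeries.rescale (-1) (linF (-(a i)))) = negU (linF (-(a i))) from rfl,
      negU_linF, neg_neg]
  have hU : constantCoeff (γ * linF (1/2)) ≠ 0 := by
    rw [map_mul, hγ.1, constantCoeff_linF, one_mul]
    exact one_ne_zero
  have hUne : γ * linF (1/2) ≠ 0 := fun h => by rw [h] at hU; simp at hU
  have hcancel : (linF (1/2))⁻¹ * linF (1/2) = 1 := by
    rw [mul_comm]
    exact PowerSeries.mul_inv_cancel _ (by rw [constantCoeff_linF]; exact one_ne_zero)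
  constructor
  · intro h
    have h2 := congrArg (fun z => z * (γ * linF (1/2))) h
    calc (∏ i ∈ Finset.range (2*k+1), linF (a i)) * A
        = (γ * linF (-(1/2)) * negU μ) * A * ((linF (1/2))⁻¹ * linF (1/2)) := by
          rw [hdef2, hcancel, mul_one]
      _ = (linF (-(1/2)) * (linF (1/2))⁻¹ * negU μ) * A * (γ * linF (1/2)) := by ring
      _ = μ * B * (γ * linF (1/2)) := h2
      _ = (γ * linF (1/2) * μ) * B := by ring
      _ = (∏ i ∈ Finset.range (2*k+1), linF (-(a i))) * B := by rw [hdef]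
  · intro h
    apply mul_right_cancel₀ hUne
    calc (linF (-(1/2)) * (linF (1/2))⁻¹ * negU μ) * A * (γ * linF (1/2))
        = (γ * linF (-(1/2)) * negU μ) * A * ((linF (1/2))⁻¹ * linF (1/2)) := by ring
      _ = (∏ i ∈ Finset.range (2*k+1), linF (a i)) * A := by rw [hdef2, hcancel, mul_one]
      _ = (∏ i ∈ Finset.range (2*k+1), linF (-(a i))) * B := h
      _ = (γ * linF (1/2) * μ) * B := by rw [hdef]
      _ = μ * B * (γ * linF (1/2)) := by ring

/-- The polynomial `∏_{j<m} (X - (c - j))`, with roots `c, c-1, …, c-m+1`. -/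
def Tpol (c : ℂ) (m : ℕ) : ℂ[X] := ∏ j ∈ Finset.range m, (Polynomial.X - Polynomial.C (c - j))

lemma Tpol_monic (c : ℂ) (m : ℕ) : (Tpol c m).Monic :=
  monic_prod_of_monic _ _ fun j _ => monic_X_sub_C _

lemma Tpol_natDegree (c : ℂ) (m : ℕ) : (Tpol c m).natDegree = m := by
  rw [Tpol, natDegree_prod]
  · simp only [natDegree_X_sub_C, Finset.sum_const, Finset.card_range, smul_eq_mul, mul_one]
  · intro j _; exact (monic_X_sub_C _).ne_zero

lemma Tpol_succ (c : ℂ) (m : ℕ) :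
    Tpol c (m+1) = Tpol c m * (Polynomial.X - Polynomial.C (c - m)) :=
  Finset.prod_range_succ _ m

lemma Tpol_succ' (c : ℂ) (m : ℕ) :
    Tpol c (m+1) = Tpol (c-1) m * (Polynomial.X - Polynomial.C c) := by
  rw [Tpol, Finset.prod_range_succ']
  congr 1
  · refine Finset.prod_congr rfl fun j _ => ?_
    congr 1
    push_cast
    ring
  · simp

lemma Tpol_comp_add (c : ℂ) (m : ℕ) :
    (Tpol c m).comp (Polynomial.X + 1) = Tpol (c-1) m := by
  rw [Tpol, Polynomial.prod_comp]
  refine Finset.prod_congr rfl fun j _ => ?_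
  simp only [sub_comp, X_comp, C_comp]
  simp only [map_sub, map_one, map_natCast, Nat.cast_add, Nat.cast_one]
  ring

lemma Tpol_fun (c : ℂ) (m : ℕ) :
    (Tpol c m).comp (Polynomial.X + 1) * (Polynomial.X - Polynomial.C c)
      = Tpol c m * (Polynomial.X - Polynomial.C (c - m)) := by
  rw [Tpol_comp_add, ← Tpol_succ', Tpol_succ]

lemma Tpol_comp_one_sub (c : ℂ) (m : ℕ) :
    (Tpol c m).comp (1 - Polynomial.X) = (-1)^m * Tpol ((m:ℂ) - c) m := by
  rw [Tpol, Polynomial.prod_comp]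
  have h : ∀ j ∈ Finset.range m,
      (Polynomial.X - Polynomial.C (c - j)).comp (1 - Polynomial.X)
        = (-1) * (Polynomial.X - Polynomial.C (((m:ℂ) - c) - ((m - 1 - j : ℕ) : ℂ))) := by
    intro j hj
    rw [Finset.mem_range] at hj
    have hcast : ((m - 1 - j : ℕ) : ℂ) = (m:ℂ) - 1 - j := by
      have : m - 1 - j = m - (1 + j) := by omega
      rw [this, Nat.cast_sub (by omega)]
      push_cast; ring
    simp only [sub_comp, X_comp, C_comp, one_comp, hcast]
    simp only [map_sub, map_one, map_natCast]
    ring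
  rw [Finset.prod_congr rfl h, Finset.prod_mul_distrib, Finset.prod_const, Finset.card_range]
  congr 1
  rw [Tpol]
  exact Finset.prod_range_reflect (fun j => Polynomial.X - Polynomial.C (((m:ℂ) - c) - j)) m

lemma pair_comp {a b : ℂ} {m : ℕ} (hab : a + b = (m:ℂ)) :
    (Tpol b m * Tpol a m).comp (1 - Polynomial.X) = Tpol b m * Tpol a m := by
  rw [mul_comp, Tpol_comp_one_sub, Tpol_comp_one_sub,
    show (m:ℂ) - b = a by linear_combination -hab,
    show (m:ℂ) - a = b by linear_combination -hab]
  have h : ((-1:ℂ[X])^m)*((-1:ℂ[X])^m) = 1 := by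
    rw [← pow_add]; exact Even.neg_one_pow ⟨m, rfl⟩
  calc ((-1:ℂ[X])^m * Tpol a m) * ((-1:ℂ[X])^m * Tpol b m)
      = ((-1:ℂ[X])^m * (-1:ℂ[X])^m) * (Tpol b m * Tpol a m) := by ring
    _ = Tpol b m * Tpol a m := by rw [h, one_mul]

lemma pair_fun {a b : ℂ} {m : ℕ} (hab : a + b = (m:ℂ)) :
    (Polynomial.X + Polynomial.C a) * (Polynomial.X + Polynomial.C b) * (Tpol b m * Tpol a m)
      = (Polynomial.X - Polynomial.C a) * (Polynomial.X - Polynomial.C b)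
        * ((Tpol b m * Tpol a m).comp (Polynomial.X + 1)) := by
  have h1 := Tpol_fun b m
  have h2 := Tpol_fun a m
  rw [Tpol_comp_add] at h1 h2
  rw [show b - (m:ℂ) = -a by linear_combination hab] at h1
  rw [show a - (m:ℂ) = -b by linear_combination hab] at h2
  rw [map_neg] at h1 h2
  rw [mul_comp, Tpol_comp_add, Tpol_comp_add]
  linear_combination (-((Polynomial.X : ℂ[X]) - Polynomial.C a) * Tpol (a-1) m) * h1
    + (-(Tpol b m) * ((Polynomial.X : ℂ[X]) + Polynomial.C a)) * h2

lemma S_fun (n : ℕ) :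
    (Polynomial.X + Polynomial.C (n:ℂ)) * Tpol (n:ℂ) (2*n)
      = (Polynomial.X - Polynomial.C (n:ℂ)) * ((Tpol (n:ℂ) (2*n)).comp (Polynomial.X + 1)) := by
  have h1 := Tpol_fun (n:ℂ) (2*n)
  rw [Tpol_comp_add] at h1
  rw [show (n:ℂ) - (2*n:ℕ) = -(n:ℂ) by push_cast; ring, map_neg] at h1
  rw [Tpol_comp_add]
  linear_combination -h1

lemma S_comp (n : ℕ) :
    (Tpol (n:ℂ) (2*n)).comp (1 - Polynomial.X) = Tpol (n:ℂ) (2*n) := by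
  rw [Tpol_comp_one_sub, show ((2*n:ℕ):ℂ) - n = (n:ℂ) by push_cast; ring, pow_mul]
  norm_num

lemma prod_range_pair {M : Type*} [CommMonoid M] (f : ℕ → M) (k : ℕ) :
    ∏ i ∈ Finset.range (2*k), f i = ∏ i ∈ Finset.range k, (f (2*i) * f (2*i+1)) := by
  induction k with
  | zero => simp
  | succ k ih =>
    rw [show 2*(k+1) = 2*k+1+1 by ring, Finset.prod_range_succ, Finset.prod_range_succ,
      Finset.prod_range_succ, ih, mul_assoc]

lemma construct (k : ℕ) (a : ℕ → ℂ) (m : ℕ → ℕ) (n : ℕ)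
    (hm : ∀ i < k, a (2*i) + a (2*i+1) = (m i : ℂ)) (hn : a (2*k) = (n:ℂ)) :
    ∃ P : ℂ[X], P.Monic ∧ Even P.natDegree ∧ P.comp (1 - Polynomial.X) = P ∧
      (∏ i ∈ Finset.range (2*k+1), (Polynomial.X + Polynomial.C (a i))) * P
        = (∏ i ∈ Finset.range (2*k+1), (Polynomial.X - Polynomial.C (a i)))
            * P.comp (Polynomial.X + 1) := by
  set Q : ℕ → ℂ[X] := fun i => Tpol (a (2*i+1)) (m i) * Tpol (a (2*i)) (m i) with hQ
  refine ⟨(∏ i ∈ Finset.range k, Q i) * Tpol (n:ℂ) (2*n), ?_, ?_, ?_, ?_⟩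
  · exact (monic_prod_of_monic _ _ fun i _ => (Tpol_monic _ _).mul (Tpol_monic _ _)).mul
      (Tpol_monic _ _)
  · have hQm : ∀ i ∈ Finset.range k, (Q i).natDegree = m i + m i := fun i _ => by
      rw [hQ, (Tpol_monic _ _).natDegree_mul (Tpol_monic _ _), Tpol_natDegree, Tpol_natDegree]
    rw [(monic_prod_of_monic _ _ fun i _ => (Tpol_monic _ _).mul (Tpol_monic _ _)).natDegree_mul
      (Tpol_monic _ _), natDegree_prod _ _ (fun i _ => ((Tpol_monic _ _).mul (Tpol_monic _ _)).ne_zero),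
      Finset.sum_congr rfl hQm, Tpol_natDegree, Finset.sum_add_distrib]
    exact ⟨(∑ i ∈ Finset.range k, m i) + n, by ring⟩
  · rw [mul_comp, Polynomial.prod_comp, S_comp,
      Finset.prod_congr rfl (fun i hi => pair_comp (hm i (Finset.mem_range.mp hi)))]
  · have hcomp : ((∏ i ∈ Finset.range k, Q i) * Tpol (n:ℂ) (2*n)).comp (Polynomial.X + 1)
        = (∏ i ∈ Finset.range k, (Q i).comp (Polynomial.X + 1))
            * (Tpol (n:ℂ) (2*n)).comp (Polynomial.X + 1) := by
      rw [mul_comp, Polynomial.prod_comp]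
    rw [hcomp]
    rw [Finset.prod_range_succ, Finset.prod_range_succ, prod_range_pair, prod_range_pair, hn]
    calc (∏ i ∈ Finset.range k,
            ((Polynomial.X + Polynomial.C (a (2*i))) * (Polynomial.X + Polynomial.C (a (2*i+1)))))
            * (Polynomial.X + Polynomial.C (n:ℂ))
            * ((∏ i ∈ Finset.range k, Q i) * Tpol (n:ℂ) (2*n))
        = (∏ i ∈ Finset.range k,
            ((Polynomial.X + Polynomial.C (a (2*i))) * (Polynomial.X + Polynomial.C (a (2*i+1)))
              * Q i))
            * ((Polynomial.X + Polynomial.C (n:ℂ)) * Tpol (n:ℂ) (2*n)) := by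
          simp only [Finset.prod_mul_distrib]; ring
      _ = (∏ i ∈ Finset.range k,
            ((Polynomial.X - Polynomial.C (a (2*i))) * (Polynomial.X - Polynomial.C (a (2*i+1)))
              * ((Q i).comp (Polynomial.X + 1))))
            * ((Polynomial.X - Polynomial.C (n:ℂ))
                * ((Tpol (n:ℂ) (2*n)).comp (Polynomial.X + 1))) := by
          rw [Finset.prod_congr rfl (fun i hi => pair_fun (hm i (Finset.mem_range.mp hi))), S_fun]
      _ = (∏ i ∈ Finset.range k,
            ((Polynomial.X - Polynomial.C (a (2*i))) * (Polynomial.X - Polynomial.C (a (2*i+1)))))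
            * (Polynomial.X - Polynomial.C (n:ℂ))
            * ((∏ i ∈ Finset.range k, (Q i).comp (Polynomial.X + 1))
                * ((Tpol (n:ℂ) (2*n)).comp (Polynomial.X + 1))) := by
          simp only [Finset.prod_mul_distrib]; ring

lemma sum_range_pair {M : Type*} [AddCommMonoid M] (f : ℕ → M) (k : ℕ) :
    ∑ i ∈ Finset.range (2*k), f i = ∑ i ∈ Finset.range k, (f (2*i) + f (2*i+1)) := by
  induction k with
  | zero => simp
  | succ k ih =>
    rw [show 2*(k+1) = 2*k+1+1 by ring, Finset.sum_range_succ, Finset.sum_range_succ,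
      Finset.sum_range_succ, ih, add_assoc]

lemma sum_ind_inc (w s : ℤ) (L : ℕ) :
    ∑ j ∈ Finset.range L, (if w = s + j then (1:ℤ) else 0)
      = if s ≤ w ∧ w < s + L then 1 else 0 := by
  induction L with
  | zero => simp only [Finset.range_zero, Finset.sum_empty]; split_ifs with h <;> omega
  | succ L ih =>
    rw [Finset.sum_range_succ, ih]
    split_ifs <;> push_cast at * <;> omega

lemma sum_ind_dec (w s : ℤ) (L : ℕ) :
    ∑ j ∈ Finset.range L, (if w = s - j then (1:ℤ) else 0)
      = if s - L < w ∧ w ≤ s then 1 else 0 := by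
  induction L with
  | zero => simp only [Finset.range_zero, Finset.sum_empty]; split_ifs with h <;> omega
  | succ L ih =>
    rw [Finset.sum_range_succ, ih]
    split_ifs <;> push_cast at * <;> omega

lemma sum_map_sub_one (R : Multiset ℂ) :
    (R.map (fun r => r - 1)).sum = R.sum - Multiset.card R := by
  induction R using Multiset.induction_on with
  | empty => simp
  | cons a s ih =>
    simp only [Multiset.map_cons, Multiset.sum_cons, Multiset.card_cons, ih]
    push_cast
    ring

lemma extract_multiset (N : ℕ) (a : ℕ → ℂ) (P : ℂ[X]) (hmon : P.Monic)
    (heq : (∏ i ∈ Finset.range N, (Polynomial.X + Polynomial.C (a i))) * P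
        = (∏ i ∈ Finset.range N, (Polynomial.X - Polynomial.C (a i)))
            * P.comp (Polynomial.X + 1)) :
    ((Finset.range N).val.map a).map Neg.neg + P.roots
      = (Finset.range N).val.map a + P.roots.map (fun r => r - 1) := by
  classical
  set A : Multiset ℂ := (Finset.range N).val.map a with hA
  have hcard : Multiset.card P.roots = P.natDegree :=
    splits_iff_card_roots.mp (IsAlgClosed.splits P)
  have hP : (P.roots.map fun r => Polynomial.X - Polynomial.C r).prod = P :=
    prod_multiset_X_sub_C_of_monic_of_roots_card_eq hmon hcard
  have hcompP : P.comp (Polynomial.X + 1)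
      = ((P.roots.map (fun r => r - 1)).map fun r => Polynomial.X - Polynomial.C r).prod := by
    conv_lhs => rw [← hP]
    rw [Polynomial.multiset_prod_comp, Multiset.map_map, Multiset.map_map]
    congr 1
    apply Multiset.map_congr rfl
    intro r _
    simp only [Function.comp_apply, sub_comp, X_comp, C_comp, map_sub, map_one]
    ring
  have hplus : (∏ i ∈ Finset.range N, (Polynomial.X + Polynomial.C (a i)))
      = ((A.map Neg.neg).map fun r => Polynomial.X - Polynomial.C r).prod := by
    rw [Finset.prod_eq_multiset_prod, hA, Multiset.map_map, Multiset.map_map]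
    congr 1
    apply Multiset.map_congr rfl
    intro i _
    simp [sub_neg_eq_add]
  have hminus : (∏ i ∈ Finset.range N, (Polynomial.X - Polynomial.C (a i)))
      = (A.map fun r => Polynomial.X - Polynomial.C r).prod := by
    rw [Finset.prod_eq_multiset_prod, hA, Multiset.map_map]
    rfl
  have h2 : (((A.map Neg.neg) + P.roots).map fun r => Polynomial.X - Polynomial.C r).prod
      = ((A + P.roots.map (fun r => r - 1)).map fun r => Polynomial.X - Polynomial.C r).prod := by
    rw [Multiset.map_add, Multiset.map_add, Multiset.prod_add, Multiset.prod_add,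
      ← hplus, ← hminus, hP, ← hcompP]
    exact heq
  have h3 := congrArg Polynomial.roots h2
  rwa [roots_multiset_prod_X_sub_C, roots_multiset_prod_X_sub_C] at h3

lemma hard_direction (k : ℕ) (a : ℕ → ℂ) (m : ℕ → ℕ)
    (hcond : SharpCond k a)
    (hm : ∀ i < k, a (2*i) + a (2*i+1) = (m i : ℂ))
    (P : ℂ[X]) (hmon : P.Monic) (heven : Even P.natDegree)
    (heq : (∏ i ∈ Finset.range (2*k+1), (Polynomial.X + Polynomial.C (a i))) * P
        = (∏ i ∈ Finset.range (2*k+1), (Polynomial.X - Polynomial.C (a i)))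
            * P.comp (Polynomial.X + 1)) :
    IsNonnegInt (a (2*k)) := by
  classical
  set A : Multiset ℂ := (Finset.range (2*k+1)).val.map a with hA
  have hmult := extract_multiset (2*k+1) a P hmon heq
  have hcard : Multiset.card P.roots = P.natDegree :=
    splits_iff_card_roots.mp (IsAlgClosed.splits P)
  -- count relation
  have hcount : ∀ t : ℂ, Multiset.count (-t) A + Multiset.count t P.roots
      = Multiset.count t A + Multiset.count (t+1) P.roots := by
    intro t
    have h1 := congrArg (Multiset.count t) hmult
    rw [Multiset.count_add, Multiset.count_add] at h1
    have h2 : Multiset.count t (A.map Neg.neg) = Multiset.count (-t) A := by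
      have := Multiset.count_map_eq_count' Neg.neg A neg_injective (-t)
      rwa [neg_neg] at this
    have h3 : Multiset.count t (P.roots.map (fun r => r - 1))
        = Multiset.count (t+1) P.roots := by
      have := Multiset.count_map_eq_count' (fun r : ℂ => r - 1) P.roots
        (fun x y h => by simpa using congrArg (· + (1:ℂ)) h) (t+1)
      simpa using this
    rw [h2, h3] at h1
    exact h1
  -- sum relation : card P.roots = 2 * sum a
  have hsum : (Multiset.card P.roots : ℂ) = 2 * ∑ i ∈ Finset.range (2*k+1), a i := by
    have h1 := congrArg Multiset.sum hmult
    rw [Multiset.sum_add, Multiset.sum_add, Multiset.sum_map_neg', sum_map_sub_one] at h1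
    have h2 : A.sum = ∑ i ∈ Finset.range (2*k+1), a i := by
      rw [Finset.sum_eq_multiset_sum]
    rw [h2] at h1
    linear_combination h1
  -- the special entry is an integer
  obtain ⟨c, hc⟩ := heven
  have hsplit : ∑ i ∈ Finset.range (2*k+1), a i
      = (∑ i ∈ Finset.range k, (m i : ℂ)) + a (2*k) := by
    rw [Finset.sum_range_succ, sum_range_pair]
    congr 1
    exact Finset.sum_congr rfl fun i hi => hm i (Finset.mem_range.mp hi)
  set M : ℕ := ∑ i ∈ Finset.range k, m i with hM
  have hMc : ((M:ℕ):ℂ) = ∑ i ∈ Finset.range k, (m i : ℂ) := by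
    rw [hM]; push_cast; rfl
  set z : ℤ := (c:ℤ) - M with hz
  have haz : a (2*k) = (z:ℂ) := by
    have e1 : ((Multiset.card P.roots : ℕ):ℂ) = 2*(c:ℂ) := by rw [hcard, hc]; push_cast; ring
    have h1 : 2*(c:ℂ) = 2 * (((M:ℂ)) + a (2*k)) := by rw [← e1, hsum, hsplit, hMc]
    rw [hz]
    push_cast
    linear_combination -h1/2
  by_cases hz0 : 0 ≤ z
  · exact ⟨z.toNat, by rw [haz]; rw [← Int.toNat_of_nonneg hz0]; push_cast; rfl⟩
  exfalso
  push_neg at hz0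
  set n : ℕ := (-z).toNat with hn
  have hn1 : 1 ≤ n := by omega
  have hzn : z = -(n:ℤ) := by omega
  have han : a (2*k) = -((n:ℕ):ℂ) := by rw [haz, hzn]; push_cast; ring
  -- integer values of the list
  have hwex : ∀ i : ℕ, ∃ wi : ℤ, (∃ v:ℤ, a i = (v:ℂ)) → a i = ((wi:ℤ):ℂ) := by
    intro i
    by_cases h : ∃ v:ℤ, a i = (v:ℂ)
    · exact ⟨h.choose, fun _ => h.choose_spec⟩
    · exact ⟨0, fun hh => absurd hh h⟩
  choose w hw using hwex
  set W : ℕ := ∑ i ∈ Finset.range (2*k+1), (w i).natAbs with hW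
  have hWb : ∀ i ∈ Finset.range (2*k+1), (w i).natAbs ≤ W :=
    fun i hi => Finset.single_le_sum (f := fun i => (w i).natAbs) (fun _ _ => Nat.zero_le _) hi
  -- choose L avoiding roots
  have hLex : ∃ L : ℕ, (n + W + 1 ≤ L) ∧
      Multiset.count ((((n:ℤ) - L : ℤ)) : ℂ) P.roots = 0 := by
    by_contra hcon
    push_neg at hcon
    have hinj : Function.Injective (fun L : ℕ => (((n:ℤ) - L : ℤ) : ℂ)) := by
      intro L1 L2 h
      simp only at h
      have : ((n:ℤ) - L1 : ℤ) = ((n:ℤ) - L2 : ℤ) := by exact_mod_cast h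
      omega
    have hsub : (Finset.Icc (n + W + 1) (n + W + 1 + Multiset.card P.roots)).image
        (fun L : ℕ => (((n:ℤ) - L : ℤ) : ℂ)) ⊆ P.roots.toFinset := by
      intro x hx
      rw [Finset.mem_image] at hx
      obtain ⟨L, hL, rfl⟩ := hx
      rw [Finset.mem_Icc] at hL
      rw [Multiset.mem_toFinset, ← Multiset.count_pos]
      have := hcon L hL.1
      omega
    have hcle := Finset.card_le_card hsub
    rw [Finset.card_image_of_injective _ hinj, Nat.card_Icc] at hcle
    have := Multiset.toFinset_card_le P.roots
    omega
  obtain ⟨L, hL1, hL2⟩ := hLex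
  -- telescoping
  have htel : ∀ Lv : ℕ, (Multiset.count (((n:ℤ):ℂ)) P.roots : ℤ)
      = (Multiset.count ((((n:ℤ) - Lv : ℤ)) : ℂ) P.roots : ℤ)
        + ∑ j ∈ Finset.range Lv,
            ((Multiset.count (((1 - (n:ℤ) + j : ℤ)):ℂ) A : ℤ)
              - (Multiset.count ((((n:ℤ) - 1 - j : ℤ)):ℂ) A : ℤ)) := by
    intro Lv
    induction Lv with
    | zero => simp
    | succ Lv ih =>
      rw [Finset.sum_range_succ, ih]
      have hc := hcount ((((n:ℤ) - Lv - 1 : ℤ)):ℂ)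
      have e1 : -((((n:ℤ) - Lv - 1 : ℤ)):ℂ) = (((1 - (n:ℤ) + Lv : ℤ)):ℂ) := by
        push_cast; ring
      have e2 : ((((n:ℤ) - Lv - 1 : ℤ)):ℂ) + 1 = ((((n:ℤ) - Lv : ℤ)) : ℂ) := by
        push_cast; ring
      have e3 : ((((n:ℤ) - (Lv+1:ℕ) : ℤ)):ℂ) = ((((n:ℤ) - Lv - 1 : ℤ)):ℂ) := by
        push_cast; ring
      rw [e1, e2] at hc
      rw [e3]
      have e4 : ((((n:ℤ) - 1 - Lv : ℤ)):ℂ) = ((((n:ℤ) - Lv - 1 : ℤ)):ℂ) := by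
        push_cast; ring
      rw [e4]
      omega
  -- counts in A as sums of indicators
  have hcountA : ∀ t : ℂ, (Multiset.count t A : ℤ)
      = ∑ i ∈ Finset.range (2*k+1), (if t = a i then (1:ℤ) else 0) := by
    intro t
    rw [hA, Multiset.count_map, ← Finset.filter_val]
    have : Multiset.card (Finset.filter (fun i => t = a i) (Finset.range (2*k+1))).val
        = (Finset.filter (fun i => t = a i) (Finset.range (2*k+1))).card := rfl
    rw [this, Finset.card_filter]
    push_cast
    rfl
  -- main inequality
  have hVsum : (0:ℤ) ≤ ∑ i ∈ Finset.range (2*k+1), ∑ j ∈ Finset.range L,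
      ((if (((1 - (n:ℤ) + j : ℤ)):ℂ) = a i then (1:ℤ) else 0)
        - (if ((((n:ℤ) - 1 - j : ℤ)):ℂ) = a i then (1:ℤ) else 0)) := by
    have h0 := htel L
    rw [hL2] at h0
    have h1 : (0:ℤ) ≤ (Multiset.count (((n:ℤ):ℂ)) P.roots : ℤ) := Int.natCast_nonneg _
    rw [h0] at h1
    simp only [Nat.cast_zero, zero_add] at h1
    calc (0:ℤ) ≤ _ := h1
      _ = ∑ j ∈ Finset.range L, ∑ i ∈ Finset.range (2*k+1),
            ((if (((1 - (n:ℤ) + j : ℤ)):ℂ) = a i then (1:ℤ) else 0)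
              - (if ((((n:ℤ) - 1 - j : ℤ)):ℂ) = a i then (1:ℤ) else 0)) := by
          refine Finset.sum_congr rfl fun j _ => ?_
          rw [hcountA, hcountA, ← Finset.sum_sub_distrib]
      _ = _ := Finset.sum_comm
  -- evaluate the inner sums
  set V : ℕ → ℤ := fun i => (if (∃ v:ℤ, a i = (v:ℂ)) then
      ((if (n:ℤ) ≤ w i then (1:ℤ) else 0) - (if w i ≤ -(n:ℤ) then (1:ℤ) else 0)) else 0) with hV
  have hVval : ∀ i ∈ Finset.range (2*k+1), (∑ j ∈ Finset.range L,
      ((if (((1 - (n:ℤ) + j : ℤ)):ℂ) = a i then (1:ℤ) else 0)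
        - (if ((((n:ℤ) - 1 - j : ℤ)):ℂ) = a i then (1:ℤ) else 0))) = V i := by
    intro i hi
    simp only [hV]
    by_cases hint : ∃ v:ℤ, a i = (v:ℂ)
    · rw [if_pos hint]
      have hai := hw i hint
      have hb := hWb i hi
      have hstep : ∀ j ∈ Finset.range L,
          ((if (((1 - (n:ℤ) + j : ℤ)):ℂ) = a i then (1:ℤ) else 0)
            - (if ((((n:ℤ) - 1 - j : ℤ)):ℂ) = a i then (1:ℤ) else 0))
          = ((if w i = 1 - (n:ℤ) + j then (1:ℤ) else 0)
            - (if w i = (n:ℤ) - 1 - j then (1:ℤ) else 0)) := by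
        intro j _
        congr 1
        · refine if_congr ?_ rfl rfl
          rw [hai]
          constructor
          · intro h; exact_mod_cast h.symm
          · intro h; exact_mod_cast congrArg (fun z : ℤ => ((z:ℂ))) h.symm
        · refine if_congr ?_ rfl rfl
          rw [hai]
          constructor
          · intro h; exact_mod_cast h.symm
          · intro h; exact_mod_cast congrArg (fun z : ℤ => ((z:ℂ))) h.symm
      rw [Finset.sum_congr rfl hstep, Finset.sum_sub_distrib,
        sum_ind_inc (w i) (1 - (n:ℤ)) L, sum_ind_dec (w i) ((n:ℤ) - 1) L]
      have habs : (w i).natAbs ≤ W := hb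
      split_ifs <;> omega
    · rw [if_neg hint]
      apply Finset.sum_eq_zero
      intro j _
      rw [if_neg (fun h => hint ⟨_, h.symm⟩), if_neg (fun h => hint ⟨_, h.symm⟩), sub_self]
  have hVsum2 : (0:ℤ) ≤ ∑ i ∈ Finset.range (2*k+1), V i := by
    rw [← Finset.sum_congr rfl hVval]
    exact hVsum
  -- value at 2k
  have hint2k : ∃ v:ℤ, a (2*k) = (v:ℂ) := ⟨-(n:ℤ), by rw [han]; push_cast; ring⟩
  have hw2k : w (2*k) = -(n:ℤ) := by
    have h1 := hw (2*k) hint2k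
    rw [han] at h1
    have : ((-(n:ℤ) : ℤ):ℂ) = ((w (2*k) : ℤ):ℂ) := by rw [← h1]; push_cast; ring
    exact_mod_cast this.symm
  have hV2k : V (2*k) = -1 := by
    simp only [hV]
    rw [if_pos hint2k, hw2k]
    split_ifs <;> omega
  -- get a good pair
  rw [Finset.sum_range_succ V (2*k), hV2k, sum_range_pair V k] at hVsum2
  have hpair_ex : ∃ i ∈ Finset.range k, (0:ℤ) < V (2*i) + V (2*i+1) := by
    by_contra hcon
    push_neg at hcon
    have : ∑ i ∈ Finset.range k, (V (2*i) + V (2*i+1)) ≤ 0 :=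
      Finset.sum_nonpos fun i hi => hcon i hi
    omega
  obtain ⟨i, hik, hVpos⟩ := hpair_ex
  rw [Finset.mem_range] at hik
  -- both entries of the pair are integers
  have hint0 : ∃ v:ℤ, a (2*i) = (v:ℂ) := by
    by_contra h0
    have h1 : ¬ ∃ v:ℤ, a (2*i+1) = (v:ℂ) := by
      rintro ⟨v, hv⟩
      refine h0 ⟨(m i : ℤ) - v, ?_⟩
      have := hm i hik
      push_cast
      linear_combination this - hv
    simp only [hV, if_neg h0, if_neg h1] at hVpos
    omega
  have ha0 := hw (2*i) hint0
  have hint1 : ∃ v:ℤ, a (2*i+1) = (v:ℂ) := by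
    refine ⟨(m i : ℤ) - w (2*i), ?_⟩
    have := hm i hik
    push_cast
    linear_combination this - ha0
  have ha1 := hw (2*i+1) hint1
  set w0 := w (2*i) with hw0d
  set w1 := w (2*i+1) with hw1d
  have hw01 : w0 + w1 = (m i : ℤ) := by
    have h1 : ((w0 + w1 : ℤ):ℂ) = (((m i : ℕ)):ℂ) := by
      push_cast
      rw [← ha0, ← ha1]
      exact_mod_cast hm i hik
    exact_mod_cast h1
  -- key minimality consequence
  have key : ∀ p : ℕ, 2*i ≤ p → p ≤ 2*i+1 → ∀ wp : ℤ, a p = ((wp:ℤ):ℂ) → (n:ℤ) ≤ wp →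
      0 ≤ wp - n - (m i : ℤ) := by
    intro p hp1 hp2 wp hap hwp
    have hagood : a p + a (2*k) = (((wp - (n:ℤ)).toNat : ℕ) : ℂ) := by
      rw [hap, han]
      push_cast
      have h := Int.toNat_of_nonneg (show (0:ℤ) ≤ wp - (n:ℤ) by omega)
      exact_mod_cast congrArg (Int.cast : ℤ → ℂ) h.symm
    have hprem : ∃ p' q', 2*i ≤ p' ∧ p' < q' ∧ q' ≤ 2*k ∧ IsNonnegInt (a p' + a q') :=
      ⟨p, 2*k, hp1, by omega, le_refl _, ⟨(wp - (n:ℤ)).toNat, hagood⟩⟩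
    obtain ⟨-, hmin⟩ := hcond i hik hprem
    obtain ⟨cc, hcc⟩ := hmin p (2*k) hp1 (by omega) (le_refl _)
      ⟨(wp - (n:ℤ)).toNat, hagood⟩
    have h2 : ((wp - (n:ℤ) - (m i : ℤ) : ℤ):ℂ) = ((cc:ℕ):ℂ) := by
      rw [← hcc, hap, han, hm i hik]
      push_cast
      ring
    have h3 : (wp - (n:ℤ) - (m i : ℤ) : ℤ) = (cc:ℤ) := by exact_mod_cast h2
    omega
  -- final case analysis
  simp only [hV, if_pos hint0, if_pos hint1] at hVpos
  rw [← hw0d, ← hw1d] at hVpos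
  by_cases hc0 : (n:ℤ) ≤ w0
  · have h1 := key (2*i) (le_refl _) (by omega) w0 ha0 hc0
    have h2 : ¬ ((n:ℤ) ≤ w1) := by omega
    split_ifs at hVpos <;> omega
  · have hc1 : (n:ℤ) ≤ w1 := by
      by_contra hc1
      split_ifs at hVpos <;> omega
    have h1 := key (2*i+1) (by omega) (le_refl _) w1 ha1 hc1
    split_ifs at hVpos <;> omega

lemma lowerP_linear' (c : ℂ) : lowerP (Polynomial.X - Polynomial.C c) = linF (-c) := by
  rw [show Polynomial.X - Polynomial.C c = Polynomial.X + Polynomial.C (-c) by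
    rw [map_neg, sub_eq_add_neg], lowerP_linear (-c)]

lemma poly_to_ps (N : ℕ) (b : ℕ → ℂ) (P Q : ℂ[X])
    (h : (∏ i ∈ Finset.range N, (Polynomial.X + Polynomial.C (b i))) * P
        = (∏ i ∈ Finset.range N, (Polynomial.X - Polynomial.C (b i))) * Q) :
    (∏ i ∈ Finset.range N, linF (b i)) * lowerP P
      = (∏ i ∈ Finset.range N, linF (-(b i))) * lowerP Q := by
  have h2 := congrArg lowerP h
  rw [lowerP_mul, lowerP_mul, lowerP_prod, lowerP_prod,
    Finset.prod_congr rfl (fun i _ => lowerP_linear (b i)),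
    Finset.prod_congr rfl (fun i _ => lowerP_linear' (b i))] at h2
  exact h2

lemma ps_to_poly (N : ℕ) (b : ℕ → ℂ) (P Q : ℂ[X]) (hP : P.Monic) (hQ : Q.Monic)
    (hd : P.natDegree = Q.natDegree)
    (h : (∏ i ∈ Finset.range N, linF (b i)) * lowerP P
        = (∏ i ∈ Finset.range N, linF (-(b i))) * lowerP Q) :
    (∏ i ∈ Finset.range N, (Polynomial.X + Polynomial.C (b i))) * P
      = (∏ i ∈ Finset.range N, (Polynomial.X - Polynomial.C (b i))) * Q := by
  have hmonL : (∏ i ∈ Finset.range N, (Polynomial.X + Polynomial.C (b i))).Monic :=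
    monic_prod_of_monic _ _ fun i _ => monic_X_add_C _
  have hmonR : (∏ i ∈ Finset.range N, (Polynomial.X - Polynomial.C (b i))).Monic :=
    monic_prod_of_monic _ _ fun i _ => monic_X_sub_C _
  apply lowerP_inj
  · rw [hmonL.natDegree_mul hP, hmonR.natDegree_mul hQ, hd]
    congr 1
    rw [natDegree_prod _ _ (fun i _ => (monic_X_add_C (b i)).ne_zero),
      natDegree_prod _ _ (fun i _ => (monic_X_sub_C (b i)).ne_zero)]
    simp [natDegree_X_add_C, natDegree_X_sub_C]
  · rw [lowerP_mul, lowerP_mul, lowerP_prod, lowerP_prod,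
      Finset.prod_congr rfl (fun i _ => lowerP_linear (b i)),
      Finset.prod_congr rfl (fun i _ => lowerP_linear' (b i))]
    exact h
end Aux

/-- With μ as in the setup: ((2u−1)/(2u+1))·μ(−u) ⇒ μ(u) iff a_{2k+1} ≥ 0. -/
theorem darrow_twist_iff_special_nonneg (k : ℕ) (a : ℕ → ℂ) (γ μ : PS)
    (hγ : EvenOne γ) (hμ : One1 μ)
    (hcond : SharpCond k a)
    (hpa : ∀ i < k, IsNonnegInt (a (2*i) + a (2*i+1)))
    (hdef : γ * linF (1/2) * μ = ∏ i ∈ Finset.range (2*k+1), linF (-(a i))) :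
    DArrow (linF (-(1/2)) * (linF (1/2))⁻¹ * negU μ) μ ↔
      IsNonnegInt (a (2*k)) := by
  classical
  have hmex : ∀ i : ℕ, ∃ mi : ℕ, i < k → a (2*i) + a (2*i+1) = (mi : ℂ) := by
    intro i
    by_cases h : i < k
    · obtain ⟨mi, hmi⟩ := hpa i h
      exact ⟨mi, fun _ => hmi⟩
    · exact ⟨0, fun h' => absurd h' h⟩
  choose m hm using hmex
  have hm' : ∀ i < k, a (2*i) + a (2*i+1) = ((m i : ℕ) : ℂ) := fun i hi => hm i hi
  constructor
  · rintro ⟨P, hmon, heven, hsymm, heqPS⟩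
    rw [key_equiv k a γ μ hγ hdef] at heqPS
    have hmonQ : (P.comp (Polynomial.X + 1)).Monic := by
      rw [show (Polynomial.X + 1 : ℂ[X]) = Polynomial.X + Polynomial.C 1 by rw [map_one]]
      exact hmon.comp_X_add_C 1
    have hdeg : P.natDegree = (P.comp (Polynomial.X + 1)).natDegree := by
      rw [natDegree_comp]
      rw [show (Polynomial.X + 1 : ℂ[X]) = Polynomial.X + Polynomial.C 1 by rw [map_one],
        natDegree_X_add_C, mul_one]
    have hpoly := ps_to_poly (2*k+1) a P (P.comp (Polynomial.X + 1)) hmon hmonQ hdeg heqPS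
    exact hard_direction k a m hcond hm' P hmon heven hpoly
  · rintro ⟨n, hn⟩
    obtain ⟨P, hmon, heven, hsymm, hpoly⟩ := construct k a m n hm' hn
    refine ⟨P, hmon, heven, hsymm, ?_⟩
    rw [key_equiv k a γ μ hγ hdef]
    exact poly_to_ps (2*k+1) a P (P.comp (Polynomial.X + 1)) hpoly
end
end

section
/- Let (a₁,…,a_{2k+1}) be a list of complex numbers with a_{2i−1}+a_{2i} ∈ ℤ_{≥0} for i = 1,…,k and with the ♯′-condition holding, and let (b₁,…,b_{2k+2}) be a re-indexing of the list (a₁,…,a_{2k+1}, ½) such that b_{2i−1} + b_{2i} ∈ ℤ_{≥0} for i = 1,…,k+1. Then a_{2k+1} + ½ ∈ ℤ_{≥0}. -/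
open PowerSeries Polynomial

noncomputable section

lemma nonneg_add' {x y : ℂ} (hx : IsNonnegInt x) (hy : IsNonnegInt y) :
    IsNonnegInt (x + y) := by
  obtain ⟨m, rfl⟩ := hx; obtain ⟨n, rfl⟩ := hy
  exact ⟨m + n, by push_cast; ring⟩

lemma nonneg_congr {x y : ℂ} (h : x = y) (hx : IsNonnegInt x) : IsNonnegInt y := h ▸ hx

lemma aux_matching : ∀ (k : ℕ) (a : ℕ → ℂ),
    (∀ i < k, IsNonnegInt (a (2*i) + a (2*i+1))) →
    SharpCond k a →
    ∀ M : ℕ → ℕ,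
      (∀ x, x < 2*k+2 → M x < 2*k+2 ∧ M (M x) = x ∧ M x ≠ x ∧
        IsNonnegInt ((if x = 2*k+1 then (1/2:ℂ) else a x) +
          (if M x = 2*k+1 then (1/2:ℂ) else a (M x)))) →
    IsNonnegInt (a (2*k) + 1/2) := by
  intro k
  induction k with
  | zero =>
    intro a hpa hcond M hM
    obtain ⟨h1, h2, h3, h4⟩ := hM 0 (by omega)
    have hM0 : M 0 = 1 := by omega
    rw [hM0] at h4
    norm_num at h4 ⊢
    exact h4
  | succ k IH =>
    intro a hpa hcond M hM
    -- Step 1: repair the matching so that 0 is matched with 1.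
    have hp01 : IsNonnegInt (a 0 + a 1) := by
      have := hpa 0 (by omega); norm_num at this; exact this
    have key : ∃ M'' : ℕ → ℕ, M'' 0 = 1 ∧
        (∀ x, x < 2*(k+1)+2 → M'' x < 2*(k+1)+2 ∧ M'' (M'' x) = x ∧ M'' x ≠ x ∧
          IsNonnegInt ((if x = 2*(k+1)+1 then (1/2:ℂ) else a x) +
            (if M'' x = 2*(k+1)+1 then (1/2:ℂ) else a (M'' x)))) := by
      by_cases h01 : M 0 = 1
      · exact ⟨M, h01, hM⟩
      · obtain ⟨hx0lt, hx0inv, hx0ne, hx0sum⟩ := hM 0 (by omega)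
        obtain ⟨hx1lt, hx1inv, hx1ne, hx1sum⟩ := hM 1 (by omega)
        have hx10 : M 1 ≠ 0 := fun h => h01 (h ▸ hx1inv)
        have hx01' : M 0 ≠ M 1 := by
          intro h
          rw [h] at hx0inv
          omega
        have hx0ge : 2 ≤ M 0 := by omega
        have hx1ge : 2 ≤ M 1 := by omega
        -- the crucial nonneg sum for the new pair (M 0, M 1)
        have hpair : IsNonnegInt ((if M 0 = 2*(k+1)+1 then (1/2:ℂ) else a (M 0)) +
            (if M 1 = 2*(k+1)+1 then (1/2:ℂ) else a (M 1))) := by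
          rw [if_neg (show (0:ℕ) ≠ 2*(k+1)+1 by omega)] at hx0sum
          rw [if_neg (show (1:ℕ) ≠ 2*(k+1)+1 by omega)] at hx1sum
          by_cases hA : M 0 = 2*(k+1)+1
          · rw [if_pos hA] at hx0sum ⊢
            rw [if_neg (show M 1 ≠ 2*(k+1)+1 by omega)] at hx1sum ⊢
            have hsharp := (hcond 0 (by omega)
              ⟨1, M 1, by omega, by omega, by omega, hx1sum⟩).2 1 (M 1)
              (by omega) (by omega) (by omega) hx1sum
            norm_num at hsharp
            exact nonneg_congr (by ring) (nonneg_add' hsharp hx0sum)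
          · rw [if_neg hA] at hx0sum ⊢
            by_cases hB : M 1 = 2*(k+1)+1
            · rw [if_pos hB] at hx1sum ⊢
              have hsharp := (hcond 0 (by omega)
                ⟨0, M 0, by omega, by omega, by omega, hx0sum⟩).2 0 (M 0)
                (by omega) (by omega) (by omega) hx0sum
              norm_num at hsharp
              exact nonneg_congr (by ring) (nonneg_add' hsharp hx1sum)
            · rw [if_neg hB] at hx1sum ⊢
              have hsharp0 := (hcond 0 (by omega)
                ⟨0, M 0, by omega, by omega, by omega, hx0sum⟩).2 0 (M 0)
                (by omega) (by omega) (by omega) hx0sum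
              have hsharp1 := (hcond 0 (by omega)
                ⟨0, M 0, by omega, by omega, by omega, hx0sum⟩).2 1 (M 1)
                (by omega) (by omega) (by omega) hx1sum
              norm_num at hsharp0 hsharp1
              exact nonneg_congr (by ring)
                (nonneg_add' hsharp0 (nonneg_add' hsharp1 hp01))
        refine ⟨fun z => if z = 0 then 1 else if z = 1 then 0 else
          if z = M 0 then M 1 else if z = M 1 then M 0 else M z, by simp, ?_⟩
        intro z hz
        by_cases hz0 : z = 0
        · subst hz0
          simp only [if_pos rfl, if_neg one_ne_zero, reduceIte]
          refine ⟨by omega, trivial, by omega, ?_⟩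
          rw [if_neg (show (0:ℕ) ≠ 2*(k+1)+1 by omega),
            if_neg (show (1:ℕ) ≠ 2*(k+1)+1 by omega)]
          exact hp01
        · by_cases hz1 : z = 1
          · subst hz1
            simp only [if_pos rfl, if_neg one_ne_zero, reduceIte]
            refine ⟨by omega, trivial, by omega, ?_⟩
            rw [if_neg (show (1:ℕ) ≠ 2*(k+1)+1 by omega),
              if_neg (show (0:ℕ) ≠ 2*(k+1)+1 by omega)]
            exact nonneg_congr (add_comm _ _) hp01
          · by_cases hzx0 : z = M 0
            · subst hzx0
              simp only [if_neg hz0, if_neg hz1, if_pos rfl,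
                if_neg (show M 1 ≠ 0 from hx10), if_neg (show M 1 ≠ 1 from hx1ne),
                if_neg (Ne.symm hx01'), reduceIte]
              exact ⟨by omega, trivial, Ne.symm hx01', hpair⟩
            · by_cases hzx1 : z = M 1
              · subst hzx1
                simp only [if_neg hz0, if_neg hz1, if_neg (Ne.symm hx01'),
                  if_pos rfl, if_neg (show M 0 ≠ 0 from hx0ne),
                  if_neg h01, reduceIte]
                exact ⟨by omega, trivial, hx01', nonneg_congr (add_comm _ _) hpair⟩
              · obtain ⟨l1, l2, l3, l4⟩ := hM z hz
                have hm0 : M z ≠ 0 := fun h => hzx0 (by rw [← l2, h])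
                have hm1 : M z ≠ 1 := fun h => hzx1 (by rw [← l2, h])
                have hmx0 : M z ≠ M 0 := by
                  intro h
                  apply hz0
                  rw [← l2, h, hx0inv]
                have hmx1 : M z ≠ M 1 := by
                  intro h
                  apply hz1
                  rw [← l2, h, hx1inv]
                simp only [if_neg hz0, if_neg hz1, if_neg hzx0, if_neg hzx1,
                  if_neg hm0, if_neg hm1, if_neg hmx0, if_neg hmx1]
                exact ⟨l1, l2, l3, l4⟩
    -- Step 2: shift by 2 and apply the induction hypothesis.
    obtain ⟨M'', hM''0, hM''⟩ := key
    have hM''1 : M'' 1 = 0 := by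
      have := (hM'' 0 (by omega)).2.1
      rwa [hM''0] at this
    have hrange : ∀ z, 2 ≤ z → z < 2*(k+1)+2 → 2 ≤ M'' z := by
      intro z h2 hlt
      obtain ⟨l1, l2, l3, _⟩ := hM'' z hlt
      by_contra h
      have h' : M'' z = 0 ∨ M'' z = 1 := by omega
      rcases h' with h' | h'
      · rw [h'] at l2; omega
      · rw [h'] at l2; omega
    have hres := IH (fun n => a (n+2)) ?_ ?_ (fun x => M'' (x+2) - 2) ?_
    · have e : 2*(k+1) = 2*k+2 := by ring
      rw [e]
      exact hres
    · intro i hi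
      have := hpa (i+1) (by omega)
      show IsNonnegInt (a (2*i+2) + a (2*i+2+1))
      have e1 : 2*(i+1) = 2*i+2 := by ring
      rwa [e1] at this
    · intro i hi hex
      obtain ⟨p, q, hp, hpq, hq, hnn⟩ := hex
      have hnn' : IsNonnegInt (a (p+2) + a (q+2)) := hnn
      have hmain := hcond (i+1) (by omega) ⟨p+2, q+2, by omega, by omega, by omega, hnn'⟩
      have e1 : 2*(i+1) = 2*i+2 := by ring
      constructor
      · have := hmain.1
        show IsNonnegInt (a (2*i+2) + a (2*i+2+1))
        rwa [e1] at this
      · intro p' q' h1 h2 h3 h4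
        have h4' : IsNonnegInt (a (p'+2) + a (q'+2)) := h4
        have := hmain.2 (p'+2) (q'+2) (by omega) (by omega) (by omega) h4'
        show IsNonnegInt (a (p'+2) + a (q'+2) - (a (2*i+2) + a (2*i+2+1)))
        rwa [e1] at this
    · intro x hx
      obtain ⟨l1, l2, l3, l4⟩ := hM'' (x+2) (by omega)
      have hge : 2 ≤ M'' (x+2) := hrange (x+2) (by omega) (by omega)
      have e : M'' (x+2) - 2 + 2 = M'' (x+2) := by omega
      refine ⟨?_, ?_, ?_, ?_⟩
      · show M'' (x+2) - 2 < 2*k+2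
        omega
      · show M'' (M'' (x+2) - 2 + 2) - 2 = x
        rw [e, l2]
        omega
      · show M'' (x+2) - 2 ≠ x
        omega
      · show IsNonnegInt ((if x = 2*k+1 then (1/2:ℂ) else a (x+2)) +
          (if M'' (x+2) - 2 = 2*k+1 then (1/2:ℂ) else a (M'' (x+2) - 2 + 2)))
        rw [e]
        by_cases hA : x = 2*k+1
        · rw [if_pos hA, if_pos (show x+2 = 2*(k+1)+1 by omega)] at *
          by_cases hB : M'' (x+2) - 2 = 2*k+1
          · rw [if_pos hB]
            rw [if_pos (show M'' (x+2) = 2*(k+1)+1 by omega)] at l4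
            exact l4
          · rw [if_neg hB]
            rw [if_neg (show M'' (x+2) ≠ 2*(k+1)+1 by omega)] at l4
            exact l4
        · rw [if_neg hA]
          rw [if_neg (show x+2 ≠ 2*(k+1)+1 by omega)] at l4
          by_cases hB : M'' (x+2) - 2 = 2*k+1
          · rw [if_pos hB]
            rw [if_pos (show M'' (x+2) = 2*(k+1)+1 by omega)] at l4
            exact l4
          · rw [if_neg hB]
            rw [if_neg (show M'' (x+2) ≠ 2*(k+1)+1 by omega)] at l4
            exact l4

/-- If the list (a₁,…,a_{2k+1},½) admits a re-indexing with nonnegative pair sums,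
then a_{2k+1} + ½ ∈ ℤ_{≥0}. -/
theorem augment_half_special_bound (k : ℕ) (a b : ℕ → ℂ)
    (hpa : ∀ i < k, IsNonnegInt (a (2*i) + a (2*i+1)))
    (hcond : SharpCond k a)
    (hperm : PermOf (2*k+2) b (fun n => if n = 2*k+1 then (1/2 : ℂ) else a n))
    (hpb : ∀ i < k+1, IsNonnegInt (b (2*i) + b (2*i+1))) :
    IsNonnegInt (a (2*k) + 1/2) := by
  obtain ⟨σ, hσ⟩ := hperm
  have hfl : ∀ j : Fin (2*k+2), (if (j:ℕ) % 2 = 0 then (j:ℕ)+1 else (j:ℕ)-1) < 2*k+2 := by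
    intro j; have := j.isLt; split <;> omega
  set flF : Fin (2*k+2) → Fin (2*k+2) :=
    fun j => ⟨if (j:ℕ) % 2 = 0 then (j:ℕ)+1 else (j:ℕ)-1, hfl j⟩ with hflF
  have hflv : ∀ j : Fin (2*k+2),
      (flF j : ℕ) = if (j:ℕ) % 2 = 0 then (j:ℕ)+1 else (j:ℕ)-1 := fun j => rfl
  have hflfl : ∀ j : Fin (2*k+2), flF (flF j) = j := by
    intro j
    apply Fin.ext
    show (if (flF j : ℕ) % 2 = 0 then (flF j : ℕ)+1 else (flF j : ℕ)-1) = (j:ℕ)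
    rw [hflv]
    rcases Nat.mod_two_eq_zero_or_one (j:ℕ) with h | h
    · rw [if_pos h, if_neg (by omega)]
      omega
    · rw [if_neg (show ¬((j:ℕ) % 2 = 0) from by omega),
        if_pos (show ((j:ℕ)-1) % 2 = 0 from by omega)]
      omega
  have hflne : ∀ j : Fin (2*k+2), (flF j : ℕ) ≠ (j : ℕ) := by
    intro j
    rw [hflv]
    split <;> omega
  set M : ℕ → ℕ :=
    fun x => if h : x < 2*k+2 then (σ (flF (σ.symm ⟨x, h⟩)) : ℕ) else x with hM
  have hMx : ∀ (x : ℕ) (h : x < 2*k+2), M x = (σ (flF (σ.symm ⟨x, h⟩)) : ℕ) := by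
    intro x h
    rw [hM]
    exact dif_pos h
  have key : ∀ j : Fin (2*k+2), M (σ j : ℕ) = (σ (flF j) : ℕ) := by
    intro j
    have hs : σ.symm (⟨(σ j : ℕ), (σ j).isLt⟩ : Fin (2*k+2)) = j :=
      Equiv.symm_apply_apply σ j
    rw [hMx _ (σ j).isLt, hs]
  refine aux_matching k a hpa hcond M ?_
  intro x hx
  set j : Fin (2*k+2) := σ.symm ⟨x, hx⟩ with hj
  have hσj : σ j = ⟨x, hx⟩ := Equiv.apply_symm_apply σ _
  have hMxeq : M x = (σ (flF j) : ℕ) := by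
    have h := key j
    rw [hσj] at h
    exact h
  refine ⟨?_, ?_, ?_, ?_⟩
  · rw [hMxeq]; exact (σ (flF j)).isLt
  · rw [hMxeq]
    have h2 := key (flF j)
    rw [hflfl j, hσj] at h2
    exact h2
  · rw [hMxeq]
    intro hcontra
    have hσeq : σ (flF j) = σ j := by
      rw [hσj]; exact Fin.ext hcontra
    exact hflne j (congrArg Fin.val (σ.injective hσeq))
  · have hc1 : b (j : ℕ) = (if x = 2*k+1 then (1/2:ℂ) else a x) := by
      have h := hσ j
      rw [hσj] at h
      exact h
    have hc2 : b (flF j : ℕ) = (if M x = 2*k+1 then (1/2:ℂ) else a (M x)) := by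
      have h := hσ (flF j)
      rw [← hMxeq] at h
      exact h
    rw [← hc1, ← hc2]
    have hb := hpb ((j:ℕ)/2) (by have := j.isLt; omega)
    rcases Nat.mod_two_eq_zero_or_one (j:ℕ) with hpar | hpar
    · have e2 : 2*((j:ℕ)/2)+1 = (flF j : ℕ) := by rw [hflv, if_pos hpar]; omega
      have e1 : 2*((j:ℕ)/2) = (j:ℕ) := by omega
      rw [e2, e1] at hb
      exact hb
    · have e2 : 2*((j:ℕ)/2)+1 = (j:ℕ) := by omega
      have e1 : 2*((j:ℕ)/2) = (flF j : ℕ) := by rw [hflv, if_neg (by omega)]; omega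
      rw [e2, e1] at hb
      exact nonneg_congr (add_comm _ _) hb
end
end

section
/- If a list (a₁,…,a_{2k+1}) of complex numbers satisfies the ♯′-condition and a_{2i−1}+a_{2i} ∈ ℤ_{≥0} for i = 1,…,k, then for any a ∈ ℂ the list (a, −a, a₁,…,a_{2k+1}) also satisfies the ♯′-condition (with the pairing (a,−a) as its first pair), and has the same ♯′-special element a_{2k+1}. -/
open PowerSeries Polynomial

noncomputable section

/-- Prepending a pair (x, −x) to a ♯′-indexed list keeps the ♯′-condition and the
♯′-special element. -/
theorem prepend_pair_sharp (k : ℕ) (a : ℕ → ℂ) (x : ℂ)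
    (hcond : SharpCond k a)
    (hpa : ∀ i < k, IsNonnegInt (a (2*i) + a (2*i+1))) :
    SharpCond (k+1) (fun n => if n = 0 then x else if n = 1 then -x else a (n-2)) ∧
    IsSharpSpecial' (k+1)
      (fun n => if n = 0 then x else if n = 1 then -x else a (n-2)) (a (2*k)) := by
  set b : ℕ → ℂ := fun n => if n = 0 then x else if n = 1 then -x else a (n-2) with hbdef
  have hbn : ∀ n, 2 ≤ n → b n = a (n-2) := by
    intro n hn
    simp only [hbdef]
    rw [if_neg (by omega), if_neg (by omega)]
  have hcond' : SharpCond (k+1) b := by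
    intro i hi hex
    rcases Nat.eq_zero_or_pos i with rfl | hipos
    · have hb01 : b (2*0) + b (2*0+1) = 0 := by simp [hbdef]
      refine ⟨hb01 ▸ ⟨0, by norm_num⟩, ?_⟩
      intro p q _ _ _ h
      rw [hb01, sub_zero]
      exact h
    · obtain ⟨j, rfl⟩ : ∃ j, i = j+1 := ⟨i-1, (Nat.succ_pred_eq_of_pos hipos).symm⟩
      have hj : j < k := by omega
      have e1 : b (2*(j+1)) = a (2*j) := by
        rw [hbn _ (by omega)]; congr 1
      have e2 : b (2*(j+1)+1) = a (2*j+1) := by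
        rw [hbn _ (by omega)]; congr 1
      refine ⟨by rw [e1, e2]; exact hpa j hj, ?_⟩
      intro p q hp hpq hq h
      have hp2 : 2 ≤ p := by omega
      have hq2 : 2 ≤ q := by omega
      rw [hbn p hp2, hbn q hq2] at h
      have hex' : ∃ p' q', 2*j ≤ p' ∧ p' < q' ∧ q' ≤ 2*k ∧ IsNonnegInt (a p' + a q') :=
        ⟨p-2, q-2, by omega, by omega, by omega, h⟩
      have := (hcond j hj hex').2 (p-2) (q-2) (by omega) (by omega) (by omega) h
      rw [hbn p hp2, hbn q hq2, e1, e2]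
      exact this
  refine ⟨hcond', b, ⟨Equiv.refl _, fun i => rfl⟩, hcond', ?_⟩
  rw [hbn _ (by omega)]
  congr 1
end
end
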